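/- An order monomorphism (order embedding) between two flag-connected diamond lattices of the same finite rank is an order isomorphism. -/

import Mathlib

set_option linter.unusedSectionVars false
set_option linter.unusedVariables false


/-- Adjacency of flags: they differ in exactly one element. -/
def flagAdj {α : Type*} [PartialOrder α] (F F' : Flag α) : Prop :=
  F ≠ F' ∧ ((F : Set α) \ (F' : Set α)).ncard = 1 ∧ ((F' : Set α) \ (F : Set α)).ncard = 1

/-- The flag graph of a poset. -/
def flagGraph (α : Type*) [PartialOrder α] : SimpleGraph (Flag α) where
  Adj := flagAdj
  symm := ⟨fun _ _ h => ⟨h.1.symm, h.2.2, h.2.1⟩⟩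
  loopless := ⟨fun _ h => h.1 rfl⟩

/-- The diamond condition: every rank-2 interval has exactly 4 elements. -/
def IsDiamond (α : Type*) [PartialOrder α] [GradeOrder ℕ α] : Prop :=
  ∀ a b : α, a ≤ b → grade ℕ b = grade ℕ a + 2 → (Set.Icc a b).ncard = 4

section Graded
variable {α : Type*} [Fintype α] [PartialOrder α] [BoundedOrder α] [GradeBoundedOrder ℕ α]

lemma myGrade_le_top (a : α) : grade ℕ a ≤ grade ℕ (⊤ : α) :=
  grade_strictMono.monotone le_top

lemma myGrade_bot : grade ℕ (⊥ : α) = 0 := grade_bot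

lemma eq_bot_of_grade {a : α} (h : grade ℕ a = 0) : a = ⊥ := by
  by_contra hne
  have h1 : (⊥ : α) < a := bot_lt_iff_ne_bot.mpr hne
  have := grade_strictMono (𝕆 := ℕ) h1
  rw [myGrade_bot, h] at this
  exact lt_irrefl _ this

lemma eq_top_of_grade {a : α} (h : grade ℕ a = grade ℕ (⊤ : α)) : a = ⊤ := by
  by_contra hne
  have h1 : a < ⊤ := lt_top_iff_ne_top.mpr hne
  have := grade_strictMono (𝕆 := ℕ) h1
  omega

lemma chain_grade_injOn {C : Set α} (hC : IsChain (· ≤ ·) C) : Set.InjOn (grade ℕ) C := by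
  intro x hx y hy h
  rcases hC.total hx hy with hxy | hyx
  · rcases eq_or_lt_of_le hxy with h' | h'
    · exact h'
    · exact absurd h (grade_strictMono h').ne
  · rcases eq_or_lt_of_le hyx with h' | h'
    · exact h'.symm
    · exact absurd h.symm (grade_strictMono h').ne

lemma chain_lt_iff {C : Set α} (hC : IsChain (· ≤ ·) C) {x y : α} (hx : x ∈ C) (hy : y ∈ C) :
    x < y ↔ grade ℕ x < grade ℕ y := by
  constructor
  · exact fun h => grade_strictMono h
  · intro h
    rcases hC.total hx hy with h' | h'
    · refine lt_of_le_of_ne h' ?_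
      rintro rfl
      exact lt_irrefl _ h
    · exact absurd (grade_strictMono.monotone h') (not_le.mpr h)

lemma chain_le_iff {C : Set α} (hC : IsChain (· ≤ ·) C) {x y : α} (hx : x ∈ C) (hy : y ∈ C) :
    x ≤ y ↔ grade ℕ x ≤ grade ℕ y := by
  constructor
  · exact fun h => grade_strictMono.monotone h
  · intro h
    rcases hC.total hx hy with h' | h'
    · exact h'
    · rcases eq_or_lt_of_le h' with rfl | h''
      · exact le_rfl
      · exact absurd (grade_strictMono (𝕆 := ℕ) h'') (not_lt.mpr h)

lemma flag_grade_surj (F : Flag α) : ∀ k, k ≤ grade ℕ (⊤ : α) → ∃ a ∈ (F : Set α), grade ℕ a = k := by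
  intro k
  induction k with
  | zero => exact fun _ => ⟨⊥, F.bot_mem, myGrade_bot⟩
  | succ k ih =>
    intro hk
    obtain ⟨a, haF, hag⟩ := ih (Nat.le_of_succ_le hk)
    have hane : a ≠ ⊤ := by
      rintro rfl; omega
    set S : Set α := {x | x ∈ (F : Set α) ∧ a < x} with hS
    have hSne : S.Nonempty := ⟨⊤, F.top_mem, lt_top_iff_ne_top.mpr hane⟩
    obtain ⟨b, hbS, hbmin⟩ : ∃ b ∈ S, ∀ x ∈ S, id x ≤ id b → id b = id x := by
      obtain ⟨b, hb⟩ := (Set.toFinite S).exists_minimal hSne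
      exact ⟨b, hb.1, fun x hx hxb => (le_antisymm hxb (hb.2 hx hxb)).symm⟩
    simp only [id] at hbmin
    have hcov : a ⋖ b := by
      refine ⟨hbS.2, ?_⟩
      intro c hac hcb
      have hcF : c ∈ (F : Set α) := by
        by_contra hcF
        have hchain : IsChain (· ≤ ·) (insert c (F : Set α)) := by
          refine F.chain_le.insert ?_
          intro x hx _
          rcases F.chain_le.total haF hx with h' | h'
          · rcases eq_or_lt_of_le h' with rfl | h''
            · exact Or.inr hac.le
            · rcases F.chain_le.total hbS.1 hx with hbx | hxb
              · exact Or.inl (hcb.le.trans hbx)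
              · have : b = x := hbmin x ⟨hx, h''⟩ hxb
                exact Or.inl (hcb.le.trans this.le)
          · exact Or.inr (h'.trans hac.le)
        have := F.maxChain.2 hchain (Set.subset_insert _ _)
        exact hcF (this ▸ Set.mem_insert c _)
      have : b = c := hbmin c ⟨hcF, hac⟩ hcb.le
      exact absurd this (ne_of_gt hcb)
    have hg : grade ℕ a ⋖ grade ℕ b := hcov.grade ℕ
    have : grade ℕ b = k + 1 := by
      have := Order.covBy_iff_add_one_eq.mp hg
      omega
    exact ⟨b, hbS.1, this⟩

lemma flag_bijOn (F : Flag α) :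
    Set.BijOn (grade ℕ) (F : Set α) (Set.Iic (grade ℕ (⊤ : α))) := by
  refine ⟨fun a _ => myGrade_le_top a, chain_grade_injOn F.chain_le, ?_⟩
  intro k hk
  obtain ⟨a, ha, rfl⟩ := flag_grade_surj F k hk
  exact ⟨a, ha, rfl⟩

lemma flag_ncard (F : Flag α) : (F : Set α).ncard = grade ℕ (⊤ : α) + 1 := by
  have h1 := Set.ncard_image_of_injOn (chain_grade_injOn F.chain_le)
  rw [(flag_bijOn F).image_eq] at h1
  rw [← h1]
  have : Set.Iic (grade ℕ (⊤ : α)) = ↑(Finset.Iic (grade ℕ (⊤ : α))) := by simp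
  rw [this, Set.ncard_coe_finset, Nat.card_Iic]

lemma maxChain_of_ncard {C : Set α} (hC : IsChain (· ≤ ·) C)
    (hcard : C.ncard = grade ℕ (⊤ : α) + 1) : IsMaxChain (· ≤ ·) C := by
  have himg : grade ℕ '' C = Set.Iic (grade ℕ (⊤ : α)) := by
    apply Set.eq_of_subset_of_ncard_le
    · rintro _ ⟨a, _, rfl⟩; exact myGrade_le_top a
    · rw [Set.ncard_image_of_injOn (chain_grade_injOn hC), hcard]
      have : Set.Iic (grade ℕ (⊤ : α)) = ↑(Finset.Iic (grade ℕ (⊤ : α))) := by simp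
      rw [this, Set.ncard_coe_finset, Nat.card_Iic]
    · exact Set.toFinite _
  refine ⟨hC, ?_⟩
  intro C' hC' hsub
  refine hsub.antisymm ?_
  intro z hz
  have hzg : grade ℕ z ∈ Set.Iic (grade ℕ (⊤ : α)) := myGrade_le_top z
  rw [← himg] at hzg
  obtain ⟨x, hx, hxz⟩ := hzg
  have := chain_grade_injOn hC' (hsub hx) hz hxz
  rwa [← this]

/-- grade formula inside a flag -/
lemma flag_grade_eq_ncard (F : Flag α) {a : α} (ha : a ∈ (F : Set α)) :
    grade ℕ a = {x ∈ (F : Set α) | x < a}.ncard := by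
  have himg : grade ℕ '' {x ∈ (F : Set α) | x < a} = Set.Iio (grade ℕ a) := by
    ext k
    constructor
    · rintro ⟨x, ⟨hxF, hxa⟩, rfl⟩
      exact grade_strictMono (𝕆 := ℕ) hxa
    · intro hk
      have hk' : k ≤ grade ℕ (⊤ : α) := le_trans (le_of_lt hk) (myGrade_le_top a)
      obtain ⟨x, hxF, rfl⟩ := flag_grade_surj F k hk'
      exact ⟨x, ⟨hxF, (chain_lt_iff F.chain_le hxF ha).mpr hk⟩, rfl⟩
  have h1 := Set.ncard_image_of_injOn
    ((chain_grade_injOn F.chain_le).mono (fun x hx => hx.1) :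
      Set.InjOn (grade ℕ) {x ∈ (F : Set α) | x < a})
  rw [himg] at h1
  rw [← h1]
  have : Set.Iio (grade ℕ a) = ↑(Finset.Iio (grade ℕ a)) := by simp
  rw [this, Set.ncard_coe_finset, Nat.card_Iio]

lemma flag_grade_unique (F : Flag α) {x y : α} (hx : x ∈ (F : Set α)) (hy : y ∈ (F : Set α))
    (h : grade ℕ x = grade ℕ y) : x = y :=
  chain_grade_injOn F.chain_le hx hy h

lemma mem_flag_of_mem (a : α) : ∃ F : Flag α, a ∈ (F : Set α) := by
  obtain ⟨M, hM, haM⟩ := (Set.subsingleton_singleton (a := a)).isChain.exists_maxChain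
  exact ⟨Flag.ofIsMaxChain M hM, haM rfl⟩

end Graded

section Two
variable {P Q : Type*}
    [Fintype P] [Lattice P] [BoundedOrder P] [GradeBoundedOrder ℕ P]
    [Fintype Q] [Lattice Q] [BoundedOrder Q] [GradeBoundedOrder ℕ Q]
    (e : P ↪o Q) (htop : grade ℕ (⊤ : P) = grade ℕ (⊤ : Q))
include htop

lemma image_flag_maxChain (F : Flag P) : IsMaxChain (· ≤ ·) (e '' (F : Set P)) := by
  apply maxChain_of_ncard
  · exact IsChain.image_of_map_rel _ _ _ (fun a b h => e.monotone h) F.chain_le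
  · rw [Set.ncard_image_of_injective _ e.injective, flag_ncard, htop]

/-- Image of a flag under an order embedding between equal-rank graded orders. -/
def flagMap (F : Flag P) : Flag Q := Flag.ofIsMaxChain _ (image_flag_maxChain e htop F)

lemma coe_flagMap (F : Flag P) : (flagMap e htop F : Set Q) = e '' (F : Set P) := rfl

lemma grade_emb (a : P) : grade ℕ (e a) = grade ℕ a := by
  obtain ⟨F, haF⟩ := mem_flag_of_mem a
  have haF' : e a ∈ (flagMap e htop F : Set Q) := ⟨a, haF, rfl⟩
  rw [flag_grade_eq_ncard (flagMap e htop F) haF', flag_grade_eq_ncard F haF]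
  have himg : {y ∈ (flagMap e htop F : Set Q) | y < e a} = e '' {x ∈ (F : Set P) | x < a} := by
    ext y
    constructor
    · rintro ⟨⟨x, hxF, rfl⟩, hlt⟩
      exact ⟨x, ⟨hxF, e.lt_iff_lt.mp hlt⟩, rfl⟩
    · rintro ⟨x, ⟨hxF, hlt⟩, rfl⟩
      exact ⟨⟨x, hxF, rfl⟩, e.lt_iff_lt.mpr hlt⟩
  rw [himg, Set.ncard_image_of_injective _ e.injective]

lemma adj_struct {F1 G : Flag Q} (h : flagAdj F1 G) :
    ∃ y z, (F1 : Set Q) \ (G : Set Q) = {y} ∧ (G : Set Q) \ (F1 : Set Q) = {z} ∧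
      grade ℕ z = grade ℕ y ∧ 0 < grade ℕ y ∧ grade ℕ y < grade ℕ (⊤ : Q) := by
  obtain ⟨hne, h1, h2⟩ := h
  obtain ⟨y, hy⟩ := Set.ncard_eq_one.mp h1
  obtain ⟨z, hz⟩ := Set.ncard_eq_one.mp h2
  have hyd : y ∈ (F1 : Set Q) \ (G : Set Q) := by rw [hy]; exact Set.mem_singleton y
  have hzd : z ∈ (G : Set Q) \ (F1 : Set Q) := by rw [hz]; exact Set.mem_singleton z
  have hyF1 : y ∈ (F1 : Set Q) := hyd.1
  have hyG : y ∉ (G : Set Q) := hyd.2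
  have hzG : z ∈ (G : Set Q) := hzd.1
  have hzF1 : z ∉ (F1 : Set Q) := hzd.2
  refine ⟨y, z, hy, hz, ?_, ?_, ?_⟩
  · by_contra hgr
    obtain ⟨w, hwF1, hwg⟩ := flag_grade_surj F1 (grade ℕ z) (myGrade_le_top z)
    have hwy : w ≠ y := fun hwy => hgr (by rw [← hwg, hwy])
    have hwG : w ∈ (G : Set Q) := by
      by_contra hwG
      have : w ∈ (F1 : Set Q) \ (G : Set Q) := ⟨hwF1, hwG⟩
      rw [hy] at this
      exact hwy this
    exact hzF1 (flag_grade_unique G hwG hzG hwg ▸ hwF1)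
  · rcases Nat.eq_zero_or_pos (grade ℕ y) with h | h
    · exact absurd (eq_bot_of_grade h ▸ G.bot_mem) hyG
    · exact h
  · rcases lt_or_eq_of_le (myGrade_le_top y) with h | h
    · exact h
    · exact absurd (eq_top_of_grade h ▸ G.top_mem) hyG

lemma adj_lift (hdP : IsDiamond P) (hdQ : IsDiamond Q) (F : Flag P) (G : Flag Q)
    (hadj : flagAdj (flagMap e htop F) G) :
    ∃ F' : Flag P, flagAdj F F' ∧ flagMap e htop F' = G := by
  obtain ⟨y, z, hy, hz, hgz, hk0, hkn⟩ := adj_struct htop hadj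
  have hyd : y ∈ (flagMap e htop F : Set Q) \ (G : Set Q) := by
    rw [hy]; exact Set.mem_singleton y
  have hzd : z ∈ (G : Set Q) \ (flagMap e htop F : Set Q) := by
    rw [hz]; exact Set.mem_singleton z
  have hzG : z ∈ (G : Set Q) := hzd.1
  have hzF1 : z ∉ (flagMap e htop F : Set Q) := hzd.2
  obtain ⟨a, haF, hay⟩ := hyd.1
  set k := grade ℕ a with hkdef
  have hgy : grade ℕ y = k := by rw [← hay, grade_emb e htop]
  rw [hgy] at hgz hk0 hkn
  have hkP : k < grade ℕ (⊤ : P) := by rw [htop]; exact hkn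
  obtain ⟨p, hpF, hpg⟩ := flag_grade_surj F (k - 1) (by omega)
  obtain ⟨r, hrF, hrg⟩ := flag_grade_surj F (k + 1) (by omega)
  have hpr : p ≤ r := (chain_le_iff F.chain_le hpF hrF).mpr (by omega)
  have hIccP : (Set.Icc p r).ncard = 4 := hdP p r hpr (by omega)
  have hIccQ : (Set.Icc (e p) (e r)).ncard = 4 :=
    hdQ (e p) (e r) (e.monotone hpr) (by rw [grade_emb e htop, grade_emb e htop]; omega)
  have himg : e '' Set.Icc p r = Set.Icc (e p) (e r) := by
    refine Set.eq_of_subset_of_ncard_le ?_ ?_ (Set.toFinite _)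
    · rintro _ ⟨x, hx, rfl⟩
      exact ⟨e.monotone hx.1, e.monotone hx.2⟩
    · rw [hIccQ, Set.ncard_image_of_injective _ e.injective, hIccP]
  have hepF1 : e p ∈ (flagMap e htop F : Set Q) := ⟨p, hpF, rfl⟩
  have herF1 : e r ∈ (flagMap e htop F : Set Q) := ⟨r, hrF, rfl⟩
  have hepG : e p ∈ (G : Set Q) := by
    by_contra hc
    have : e p ∈ (flagMap e htop F : Set Q) \ (G : Set Q) := ⟨hepF1, hc⟩
    rw [hy] at this
    have := grade_emb e htop p ▸ (this ▸ hgy)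
    omega
  have herG : e r ∈ (G : Set Q) := by
    by_contra hc
    have : e r ∈ (flagMap e htop F : Set Q) \ (G : Set Q) := ⟨herF1, hc⟩
    rw [hy] at this
    have := grade_emb e htop r ▸ (this ▸ hgy)
    omega
  have hzIcc : z ∈ Set.Icc (e p) (e r) := by
    constructor
    · refine (chain_le_iff G.chain_le hepG hzG).mpr ?_
      rw [grade_emb e htop, hgz]; omega
    · refine (chain_le_iff G.chain_le hzG herG).mpr ?_
      rw [grade_emb e htop, hgz]; omega
  rw [← himg] at hzIcc
  obtain ⟨a', ha'Icc, hez⟩ := hzIcc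
  have hga' : grade ℕ a' = k := by rw [← grade_emb e htop, hez, hgz]
  have ha'F : a' ∉ (F : Set P) := fun h => hzF1 ⟨a', h, hez⟩
  have ha'a : a' ≠ a := fun h => ha'F (h ▸ haF)
  set C : Set P := insert a' ((F : Set P) \ {a}) with hC
  have hchainC : IsChain (· ≤ ·) C := by
    refine (F.chain_le.mono Set.diff_subset).insert ?_
    intro x hx _
    have hgx : grade ℕ x ≠ k := fun h =>
      hx.2 (flag_grade_unique F hx.1 haF (h.trans hkdef))
    rcases lt_or_gt_of_ne hgx with h | h
    · refine Or.inr (le_trans ?_ ha'Icc.1)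
      exact (chain_le_iff F.chain_le hx.1 hpF).mpr (by omega)
    · refine Or.inl (le_trans ha'Icc.2 ?_)
      exact (chain_le_iff F.chain_le hrF hx.1).mpr (by omega)
  have ha'notin : a' ∉ (F : Set P) \ {a} := fun h => ha'F h.1
  have hcardC : C.ncard = grade ℕ (⊤ : P) + 1 := by
    rw [hC, Set.ncard_insert_of_notMem ha'notin,
      Set.ncard_diff_singleton_of_mem haF, flag_ncard]
    have : 1 ≤ grade ℕ (⊤ : P) + 1 := by omega
    omega
  set F' : Flag P := Flag.ofIsMaxChain C (maxChain_of_ncard hchainC hcardC) with hF'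
  have hF'coe : (F' : Set P) = C := rfl
  have hFdiff : (F : Set P) \ (F' : Set P) = {a} := by
    rw [hF'coe]
    ext x
    constructor
    · rintro ⟨hxF, hxC⟩
      by_contra hxa
      exact hxC (Set.mem_insert_of_mem _ ⟨hxF, hxa⟩)
    · rintro rfl
      refine ⟨haF, fun h => ?_⟩
      rcases h with h | h
      · exact ha'a h.symm
      · exact h.2 rfl
  have hF'diff : (F' : Set P) \ (F : Set P) = {a'} := by
    rw [hF'coe]
    ext x
    constructor
    · rintro ⟨hxC, hxF⟩
      rcases hxC with h | h
      · exact h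
      · exact absurd h.1 hxF
    · rintro rfl
      exact ⟨Set.mem_insert _ _, ha'F⟩
  have hFF' : F ≠ F' := by
    intro h
    have : a ∈ (F : Set P) \ (F' : Set P) := by rw [hFdiff]; exact Set.mem_singleton a
    exact this.2 (h ▸ haF)
  refine ⟨F', ⟨hFF', by rw [hFdiff]; exact Set.ncard_singleton a,
    by rw [hF'diff]; exact Set.ncard_singleton a'⟩, ?_⟩
  apply Flag.ext
  show e '' C = (G : Set Q)
  refine Set.eq_of_subset_of_ncard_le ?_ ?_ (Set.toFinite _)
  · rintro _ ⟨x, hxC, rfl⟩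
    rcases hxC with h | h
    · rw [h, hez]; exact hzG
    · by_contra hc
      have hmem : e x ∈ (flagMap e htop F : Set Q) \ (G : Set Q) := ⟨⟨x, h.1, rfl⟩, hc⟩
      rw [hy] at hmem
      have : e x = e a := by rw [hmem, ← hay]
      exact h.2 (e.injective this)
  · rw [Set.ncard_image_of_injective _ e.injective, hcardC, flag_ncard, htop]

end Two

/-- An order monomorphism between flag-connected diamond lattices of the same
finite rank is an order isomorphism. -/
theorem stmt2 {P Q : Type*}
    [Fintype P] [Lattice P] [BoundedOrder P] [GradeBoundedOrder ℕ P]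
    [Fintype Q] [Lattice Q] [BoundedOrder Q] [GradeBoundedOrder ℕ Q]
    (d : ℕ) (hP : grade ℕ (⊤ : P) = d + 1) (hQ : grade ℕ (⊤ : Q) = d + 1)
    (hdP : IsDiamond P) (hdQ : IsDiamond Q)
    (hcP : (flagGraph P).Connected) (hcQ : (flagGraph Q).Connected)
    (φ : P → Q) (hφ : ∀ a b : P, a ≤ b ↔ φ a ≤ φ b) :
    ∃ e : P ≃o Q, ⇑e = φ := by
  set e : P ↪o Q := OrderEmbedding.ofMapLEIff φ (fun a b => (hφ a b).symm) with he
  have htop : grade ℕ (⊤ : P) = grade ℕ (⊤ : Q) := hP.trans hQ.symm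
  have key : ∀ (G1 G2 : Flag Q), (flagGraph Q).Walk G1 G2 →
      (∃ F, flagMap e htop F = G1) → (∃ F, flagMap e htop F = G2) := by
    intro G1 G2 w
    induction w with
    | nil => exact id
    | cons h p ih =>
      rintro ⟨F, rfl⟩
      obtain ⟨F', _, hF'⟩ := adj_lift e htop hdP hdQ F _ (by exact h)
      exact ih ⟨F', hF'⟩
  have hsurj : Function.Surjective φ := by
    intro q
    obtain ⟨G, hqG⟩ := mem_flag_of_mem q
    obtain ⟨w⟩ := hcQ.preconnected
      (flagMap e htop (Flag.ofIsMaxChain _ (maxChain_spec (r := (· ≤ · : P → P → Prop))))) G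
    obtain ⟨F, rfl⟩ := key _ _ w ⟨_, rfl⟩
    obtain ⟨a, _, ha⟩ := hqG
    exact ⟨a, ha⟩
  exact ⟨{ toEquiv := Equiv.ofBijective φ ⟨e.injective, hsurj⟩,
           map_rel_iff' := fun {a b} => (hφ a b).symm }, rfl⟩
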